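/- arXiv:1911.04707 — 2 statements merged into one kernel-verified Lean document; each statement's English description precedes it below -/
import Mathlib

section
/- Define e(p, d, n) := multichoose(C(n+1, p+1), d), which by the Lawson–Yau formula equals the Euler characteristic \chi(C_{p,d}(\mathbb{P}^n)) of the Chow variety of effective p-cycles of degree d in \mathbb{P}^n. Then for all natural numbers p, d, n, the recursion e(p+1, d, n+1) = e(p, d, n) + \sum_{i=1}^{d} e(p+1, i, n) \cdot e(p, d-i, n) holds. -/
lemma mc_add : ∀ a b d : ℕ, Nat.multichoose (a + b) d =
    ∑ i ∈ Finset.range (d + 1), Nat.multichoose a i * Nat.multichoose b (d - i) := by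
  intro a
  induction a with
  | zero =>
    intro b d
    rw [Finset.sum_range_succ']
    simp [Nat.multichoose_zero_succ]
  | succ a ih =>
    intro b d
    induction d with
    | zero => simp
    | succ d ihd =>
      have h1 : a + 1 + b = (a + b) + 1 := by ring
      rw [h1, Nat.multichoose_succ_succ, ih b (d + 1), ← h1, ihd]
      rw [Finset.sum_range_succ' (fun i => Nat.multichoose (a + 1) i * Nat.multichoose b (d + 1 - i)),
        Finset.sum_range_succ' (fun i => Nat.multichoose a i * Nat.multichoose b (d + 1 - i))]
      simp only [Nat.multichoose_succ_succ, add_mul, Finset.sum_add_distrib,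
        Nat.multichoose_zero_right, Nat.succ_sub_succ_eq_sub, one_mul, Nat.sub_zero]
      ring

/-- `chowEuler p d n = multichoose (C(n+1, p+1), d)`, which by the Lawson–Yau formula
equals the Euler characteristic `χ(C_{p,d}(ℙⁿ))` of the Chow variety of effective
`p`-cycles of degree `d` in `ℙⁿ`. -/
def chowEuler (p d n : ℕ) : ℕ :=
  Nat.multichoose (Nat.choose (n + 1) (p + 1)) d

/-- The recursion `e(p+1, d, n+1) = e(p, d, n) + ∑_{i=1}^{d} e(p+1, i, n) ⬝ e(p, d-i, n)`
satisfied by the Euler characteristics of Chow varieties. -/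
theorem chowEuler_recursion (p d n : ℕ) :
    chowEuler (p + 1) d (n + 1) =
      chowEuler p d n +
        ∑ i ∈ Finset.Icc 1 d, chowEuler (p + 1) i n * chowEuler p (d - i) n := by
  unfold chowEuler
  have hpascal : Nat.choose (n + 1 + 1) (p + 1 + 1) =
      Nat.choose (n + 1) (p + 1 + 1) + Nat.choose (n + 1) (p + 1) :=
    by rw [Nat.choose_succ_succ]; ring
  rw [hpascal, mc_add]
  rw [Finset.sum_range_succ']
  simp only [Nat.multichoose_zero_right, one_mul, Nat.sub_zero]
  rw [add_comm]
  congr 1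
  rw [show Finset.Icc 1 d = Finset.map ⟨fun i => i + 1, fun a b h => by simpa using h⟩
      (Finset.range d) from by
        ext x
        simp only [Finset.mem_Icc, Finset.mem_map, Finset.mem_range, Function.Embedding.coeFn_mk]
        exact ⟨fun h => ⟨x - 1, by omega, by show x - 1 + 1 = x; omega⟩, fun ⟨a, ha, he⟩ => by have he' : a + 1 = x := he; omega⟩]
  rw [Finset.sum_map]
  rfl
end

section
/- Let C \subset \mathbb{P}^2(\mathbb{C}) be the nodal plane cubic curve C = { [x:y:z] : z y^2 = x^3 + x^2 z } with node p_0 = [0:0:1]. There exists a group homomorphism \rho from the multiplicative group \mathbb{C}^\times to the group of self-homeomorphisms of C such that the induced map \mathbb{C}^\times \times C \to C, (t, p) \mapsto \rho(t)(p), is continuous, and the common fixed-point set \{ p \in C : \rho(t)(p) = p \text{ for all } t \in \mathbb{C}^\times \} is exactly the single point \{p_0\}. -/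
open Projectivization
open scoped LinearAlgebra.Projectivization

/-- The quotient topology on a projectivization (Mathlib's `Projectivization` is a
`Quotient` of the subspace of nonzero vectors). -/
noncomputable instance {K V : Type*} [DivisionRing K] [AddCommGroup V] [Module K V]
    [TopologicalSpace V] : TopologicalSpace (Projectivization K V) :=
  instTopologicalSpaceQuotient (s := projectivizationSetoid K V)

/-- The homogeneous equation `z y² = x³ + x² z` of the nodal plane cubic,
on coordinates `v = (x, y, z)`. -/
def cubicEq (v : Fin 3 → ℂ) : Prop :=
  v 2 * v 1 ^ 2 = v 0 ^ 3 + v 0 ^ 2 * v 2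

lemma e2_ne_zero : (![0, 0, 1] : Fin 3 → ℂ) ≠ 0 := by
  intro h
  simpa using congrFun h 2

/-- The nodal plane cubic `C = {[x:y:z] : z y² = x³ + x² z} ⊆ ℙ²(ℂ)`. -/
def nodalCubic : Set (ℙ ℂ (Fin 3 → ℂ)) :=
  {p | ∃ (v : Fin 3 → ℂ) (hv : v ≠ 0), p = Projectivization.mk ℂ v hv ∧ cubicEq v}

/-- The node `p₀ = [0:0:1]` of the nodal cubic. -/
noncomputable def nodalP0 : ℙ ℂ (Fin 3 → ℂ) :=
  Projectivization.mk ℂ ![0, 0, 1] e2_ne_zero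

lemma nodalP0_mem : nodalP0 ∈ nodalCubic :=
  ⟨![0, 0, 1], e2_ne_zero, rfl, by simp [cubicEq]⟩
/-- The group of self-homeomorphisms of a topological space, under composition. -/
instance homeomorphSelfGroup (X : Type*) [TopologicalSpace X] : Group (X ≃ₜ X) where
  mul f g := g.trans f
  one := Homeomorph.refl X
  inv f := f.symm
  mul_assoc _ _ _ := rfl
  one_mul f := rfl
  mul_one f := rfl
  inv_mul_cancel f := f.self_trans_symm

namespace NodalAux

open Topology

noncomputable section

/-! ### Generic topology facts about `ℙ ℂ (Fin n → ℂ)` -/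

variable {n : ℕ}

/-- The canonical quotient map from nonzero vectors. -/
def pmk (v : {v : Fin n → ℂ // v ≠ 0}) : ℙ ℂ (Fin n → ℂ) := Projectivization.mk' ℂ v

lemma pmk_eq (v : {v : Fin n → ℂ // v ≠ 0}) : pmk v = Projectivization.mk ℂ v.1 v.2 := rfl

lemma isQuotientMap_pmk : IsQuotientMap (pmk (n := n)) :=
  isQuotientMap_quotient_mk'

/-- Scaling by a unit, as a self-map of nonzero vectors. -/
def smulNZ (a : ℂˣ) (v : {v : Fin n → ℂ // v ≠ 0}) : {v : Fin n → ℂ // v ≠ 0} :=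
  ⟨(a : ℂ) • v.1, smul_ne_zero (Units.ne_zero a) v.2⟩

lemma continuous_smulNZ (a : ℂˣ) : Continuous (smulNZ (n := n) a) :=
  Continuous.subtype_mk ((continuous_const_smul ((a : ℂ))).comp continuous_subtype_val) _

lemma smulNZ_left_inv (a : ℂˣ) (v : {v : Fin n → ℂ // v ≠ 0}) :
    smulNZ a⁻¹ (smulNZ a v) = v := by
  apply Subtype.ext
  show ((a⁻¹ : ℂˣ) : ℂ) • ((a : ℂˣ) : ℂ) • v.1 = v.1
  rw [smul_smul, Units.inv_mul, one_smul]

lemma smulNZ_image (a : ℂˣ) (U : Set {v : Fin n → ℂ // v ≠ 0}) :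
    smulNZ a '' U = smulNZ a⁻¹ ⁻¹' U := by
  ext w
  constructor
  · rintro ⟨u, hu, rfl⟩
    simpa [Set.mem_preimage, smulNZ_left_inv] using hu
  · intro hw
    refine ⟨smulNZ a⁻¹ w, hw, ?_⟩
    have := smulNZ_left_inv a⁻¹ w
    rwa [inv_inv] at this

lemma isOpenMap_pmk : IsOpenMap (pmk (n := n)) := by
  intro U hU
  rw [← isQuotientMap_pmk.isOpen_preimage]
  have key : pmk ⁻¹' (pmk '' U) = ⋃ a : ℂˣ, smulNZ a '' U := by
    ext w
    simp only [Set.mem_preimage, Set.mem_image, Set.mem_iUnion]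
    constructor
    · rintro ⟨u, hu, huw⟩
      rw [pmk_eq, pmk_eq, Projectivization.mk_eq_mk_iff] at huw
      obtain ⟨a, ha⟩ := huw
      refine ⟨a⁻¹, u, hu, Subtype.ext ?_⟩
      show ((a⁻¹ : ℂˣ) : ℂ) • u.1 = w.1
      rw [← ha, Units.smul_def, smul_smul, Units.inv_mul, one_smul]
    · rintro ⟨a, u, hu, rfl⟩
      refine ⟨u, hu, ?_⟩
      rw [pmk_eq, pmk_eq, Projectivization.mk_eq_mk_iff]
      refine ⟨a⁻¹, ?_⟩
      show ((a⁻¹:ℂˣ):ℂ) • ((a:ℂ) • u.1) = u.1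
      rw [smul_smul, Units.inv_mul, one_smul]
  rw [key]
  exact isOpen_iUnion fun a => (smulNZ_image a U) ▸ (hU.preimage (continuous_smulNZ a⁻¹))

lemma pmk_eq_iff (v w : {v : Fin n → ℂ // v ≠ 0}) :
    pmk v = pmk w ↔ ∀ i j, v.1 i * w.1 j = v.1 j * w.1 i := by
  rw [pmk_eq, pmk_eq, Projectivization.mk_eq_mk_iff']
  constructor
  · rintro ⟨a, ha⟩ i j
    have hi := congrFun ha i
    have hj := congrFun ha j
    simp only [Pi.smul_apply, smul_eq_mul] at hi hj
    rw [← hi, ← hj]; ring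
  · intro h
    obtain ⟨i, hi⟩ : ∃ i, w.1 i ≠ 0 := by
      by_contra hc; push_neg at hc; exact w.2 (funext hc)
    refine ⟨v.1 i / w.1 i, funext fun j => ?_⟩
    show (v.1 i / w.1 i) * w.1 j = v.1 j
    field_simp
    linear_combination (h i j)

instance : T2Space (ℙ ℂ (Fin n → ℂ)) := by
  constructor
  intro p q hpq
  obtain ⟨v, rfl⟩ := isQuotientMap_pmk.surjective p
  obtain ⟨w, rfl⟩ := isQuotientMap_pmk.surjective q
  have hR : IsClosed {vw : {v : Fin n → ℂ // v ≠ 0} × {v : Fin n → ℂ // v ≠ 0} |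
      ∀ i j, vw.1.1 i * vw.2.1 j = vw.1.1 j * vw.2.1 i} := by
    have : {vw : {v : Fin n → ℂ // v ≠ 0} × {v : Fin n → ℂ // v ≠ 0} |
        ∀ i j, vw.1.1 i * vw.2.1 j = vw.1.1 j * vw.2.1 i} =
        ⋂ (i : Fin n) (j : Fin n), {vw | vw.1.1 i * vw.2.1 j = vw.1.1 j * vw.2.1 i} := by
      ext vw; simp
    rw [this]
    refine isClosed_iInter fun i => isClosed_iInter fun j => isClosed_eq ?_ ?_
    · exact ((continuous_apply i).comp (continuous_subtype_val.comp continuous_fst)).mul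
        ((continuous_apply j).comp (continuous_subtype_val.comp continuous_snd))
    · exact ((continuous_apply j).comp (continuous_subtype_val.comp continuous_fst)).mul
        ((continuous_apply i).comp (continuous_subtype_val.comp continuous_snd))
  have hmem : (v, w) ∈ {vw : {v : Fin n → ℂ // v ≠ 0} × {v : Fin n → ℂ // v ≠ 0} |
      ∀ i j, vw.1.1 i * vw.2.1 j = vw.1.1 j * vw.2.1 i}ᶜ := by
    intro hvw
    exact hpq ((pmk_eq_iff v w).2 hvw)
  obtain ⟨U, W, hU, hW, hvU, hwW, hUW⟩ := isOpen_prod_iff.1 hR.isOpen_compl v w hmem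
  refine ⟨pmk '' U, pmk '' W, isOpenMap_pmk U hU, isOpenMap_pmk W hW,
    ⟨v, hvU, rfl⟩, ⟨w, hwW, rfl⟩, ?_⟩
  rw [Set.disjoint_left]
  rintro p ⟨u', hu', rfl⟩ ⟨w', hw', hww⟩
  have : (u', w') ∈ U ×ˢ W := ⟨hu', hw'⟩
  exact (hUW this) ((pmk_eq_iff u' w').1 hww.symm)

instance : CompactSpace (ℙ ℂ (Fin n → ℂ)) := by
  refine ⟨?_⟩
  have hS : IsCompact {v : {v : Fin n → ℂ // v ≠ 0} | ‖v.1‖ = 1} := by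
    rw [Subtype.isCompact_iff]
    have himg : Subtype.val '' {v : {v : Fin n → ℂ // v ≠ 0} | ‖v.1‖ = 1} =
        Metric.sphere (0 : Fin n → ℂ) 1 := by
      ext x
      simp only [Set.mem_image, Set.mem_setOf_eq, mem_sphere_iff_norm, sub_zero]
      constructor
      · rintro ⟨u, hu, rfl⟩; exact hu
      · intro hx
        have hx0 : x ≠ 0 := by
          intro h; rw [h] at hx; simp at hx
        exact ⟨⟨x, hx0⟩, hx, rfl⟩
    rw [himg]
    exact isCompact_sphere 0 1
  have himg2 : pmk '' {v : {v : Fin n → ℂ // v ≠ 0} | ‖v.1‖ = 1} = Set.univ := by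
    refine Set.eq_univ_of_forall fun p => ?_
    obtain ⟨⟨v, hv⟩, rfl⟩ := isQuotientMap_pmk.surjective p
    have hvn : ‖v‖ ≠ 0 := norm_ne_zero_iff.2 hv
    set c : ℂ := (‖v‖ : ℂ) with hc
    have hcn : c ≠ 0 := by
      simp only [hc, ne_eq, Complex.ofReal_eq_zero]; exact hvn
    have hwz : c⁻¹ • v ≠ 0 := smul_ne_zero (inv_ne_zero hcn) hv
    refine ⟨⟨c⁻¹ • v, hwz⟩, ?_, ?_⟩
    · show ‖c⁻¹ • v‖ = 1
      rw [norm_smul, norm_inv]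
      have : ‖c‖ = ‖v‖ := by
        rw [hc, Complex.norm_real, Real.norm_eq_abs, abs_of_nonneg (norm_nonneg v)]
      rw [this, inv_mul_cancel₀ hvn]
    · rw [pmk_eq, pmk_eq, Projectivization.mk_eq_mk_iff']
      exact ⟨c⁻¹, rfl⟩
  rw [← himg2]
  exact hS.image isQuotientMap_pmk.continuous

/-! ### The normalization `σ : ℙ¹ → C` and the torus action -/

/-- The normalization map on vectors: `(s,r) ↦ (r(s²-r²), s(s²-r²), r³)`. -/
def SigM (v : Fin 2 → ℂ) : Fin 3 → ℂ :=
  ![v 1 * (v 0 ^ 2 - v 1 ^ 2), v 0 * (v 0 ^ 2 - v 1 ^ 2), v 1 ^ 3]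

lemma vec2_eq_zero {v : Fin 2 → ℂ} (h0 : v 0 = 0) (h1 : v 1 = 0) : v = 0 := by
  funext i
  fin_cases i
  · exact h0
  · exact h1

lemma vec3_eq_zero {v : Fin 3 → ℂ} (h0 : v 0 = 0) (h1 : v 1 = 0) (h2 : v 2 = 0) : v = 0 := by
  funext i
  fin_cases i
  · exact h0
  · exact h1
  · exact h2


lemma funext2 {f g : Fin 2 → ℂ} (h0 : f 0 = g 0) (h1 : f 1 = g 1) : f = g := by
  funext i
  fin_cases i
  · exact h0
  · exact h1

lemma funext3 {f g : Fin 3 → ℂ} (h0 : f 0 = g 0) (h1 : f 1 = g 1) (h2 : f 2 = g 2) : f = g := by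
  funext i
  fin_cases i
  · exact h0
  · exact h1
  · exact h2

lemma SigM_ne_zero {v : Fin 2 → ℂ} (hv : v ≠ 0) : SigM v ≠ 0 := by
  intro h
  have h2 := congrFun h 2
  have h1 := congrFun h 1
  simp only [SigM, Matrix.cons_val_zero, Matrix.cons_val_one, Matrix.head_cons, Pi.zero_apply] at h1 h2
  have hv1 : v 1 = 0 := by
    have : v 1 ^ 3 = 0 := by simpa using h2
    exact pow_eq_zero_iff (by norm_num) |>.1 this
  have hv0 : v 0 = 0 := by
    rw [hv1] at h1
    have : v 0 ^ 3 = 0 := by linear_combination h1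
    exact pow_eq_zero_iff (by norm_num) |>.1 this
  exact hv (vec2_eq_zero hv0 hv1)

lemma cubicEq_SigM (v : Fin 2 → ℂ) : cubicEq (SigM v) := by
  simp only [cubicEq, SigM, Matrix.cons_val_zero, Matrix.cons_val_one, Matrix.head_cons,
    Matrix.cons_val_two, Matrix.tail_cons]
  ring

lemma SigM_smul (a : ℂ) (v : Fin 2 → ℂ) : SigM (a • v) = a ^ 3 • SigM v := by
  apply funext3 <;>
    simp only [SigM, Pi.smul_apply, smul_eq_mul, Matrix.cons_val_zero, Matrix.cons_val_one,
      Matrix.head_cons, Matrix.cons_val_two, Matrix.tail_cons] <;>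
    ring

lemma continuous_SigM : Continuous SigM := by
  refine continuous_pi fun i => ?_
  fin_cases i
  · show Continuous fun v : Fin 2 → ℂ => v 1 * (v 0 ^ 2 - v 1 ^ 2)
    fun_prop
  · show Continuous fun v : Fin 2 → ℂ => v 0 * (v 0 ^ 2 - v 1 ^ 2)
    fun_prop
  · show Continuous fun v : Fin 2 → ℂ => v 1 ^ 3
    fun_prop

/-- The normalization `σ : ℙ¹ → ℙ²` of the nodal cubic. -/
def sigma : ℙ ℂ (Fin 2 → ℂ) → ℙ ℂ (Fin 3 → ℂ) :=
  Projectivization.lift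
    (fun v => Projectivization.mk ℂ (SigM v.1) (SigM_ne_zero v.2))
    (by
      rintro ⟨a, ha⟩ ⟨b, hb⟩ c hab
      simp only at hab
      subst hab
      have hc : c ≠ 0 := by
        rintro rfl
        rw [zero_smul] at ha
        exact ha rfl
      simp only
      rw [Projectivization.mk_eq_mk_iff']
      exact ⟨c ^ 3, (SigM_smul c b).symm⟩)

lemma sigma_mk (v : Fin 2 → ℂ) (hv : v ≠ 0) :
    sigma (Projectivization.mk ℂ v hv) = Projectivization.mk ℂ (SigM v) (SigM_ne_zero hv) := rfl

lemma continuous_sigma : Continuous sigma := by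
  rw [isQuotientMap_pmk.continuous_iff]
  show Continuous fun v : {v : Fin 2 → ℂ // v ≠ 0} => pmk ⟨SigM v.1, SigM_ne_zero v.2⟩
  exact isQuotientMap_pmk.continuous.comp
    (Continuous.subtype_mk (continuous_SigM.comp continuous_subtype_val) _)

/-- The linear torus action on `ℂ²` in the coordinates where the two preimages of the
node are the fixed points: `A_t = [[1+t, 1-t], [1-t, 1+t]]`. -/
def Lmap (t : ℂ) (v : Fin 2 → ℂ) : Fin 2 → ℂ :=
  ![(1 + t) * v 0 + (1 - t) * v 1, (1 - t) * v 0 + (1 + t) * v 1]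

lemma Lmap_smul (t a : ℂ) (v : Fin 2 → ℂ) : Lmap t (a • v) = a • Lmap t v := by
  apply funext2 <;>
    simp only [Lmap, Pi.smul_apply, smul_eq_mul, Matrix.cons_val_zero, Matrix.cons_val_one,
      Matrix.head_cons] <;>
    ring

lemma Lmap_comp (t s : ℂ) (v : Fin 2 → ℂ) : Lmap t (Lmap s v) = (2 : ℂ) • Lmap (t * s) v := by
  apply funext2 <;>
    simp only [Lmap, Pi.smul_apply, smul_eq_mul, Matrix.cons_val_zero, Matrix.cons_val_one,
      Matrix.head_cons] <;>
    ring

lemma Lmap_one (v : Fin 2 → ℂ) : Lmap 1 v = (2 : ℂ) • v := by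
  apply funext2 <;>
    simp only [Lmap, Pi.smul_apply, smul_eq_mul, Matrix.cons_val_zero, Matrix.cons_val_one,
      Matrix.head_cons] <;>
    ring

lemma Lmap_zero (t : ℂ) : Lmap t 0 = 0 := by
  apply funext2 <;> simp [Lmap]

lemma Lmap_ne_zero (t : ℂˣ) {v : Fin 2 → ℂ} (hv : v ≠ 0) : Lmap (t : ℂ) v ≠ 0 := by
  intro h
  have h4 : Lmap ((t⁻¹ : ℂˣ) : ℂ) (Lmap (t : ℂ) v) = (4 : ℂ) • v := by
    rw [Lmap_comp]
    have ht : ((t⁻¹ : ℂˣ) : ℂ) * (t : ℂ) = 1 := by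
      rw [← Units.val_mul, inv_mul_cancel t]
      rfl
    rw [ht, Lmap_one, smul_smul]
    norm_num
  rw [h, Lmap_zero] at h4
  have : v = 0 := by
    have h4' := h4.symm
    rw [smul_eq_zero] at h4'
    rcases h4' with h' | h'
    · norm_num at h'
    · exact h'
  exact hv this

/-- The torus action on `ℙ¹`. -/
def tau (t : ℂˣ) : ℙ ℂ (Fin 2 → ℂ) → ℙ ℂ (Fin 2 → ℂ) :=
  Projectivization.lift
    (fun v => Projectivization.mk ℂ (Lmap (t : ℂ) v.1) (Lmap_ne_zero t v.2))
    (by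
      rintro ⟨a, ha⟩ ⟨b, hb⟩ c hab
      simp only at hab
      subst hab
      have hc : c ≠ 0 := by
        rintro rfl
        rw [zero_smul] at ha
        exact ha rfl
      simp only
      rw [Projectivization.mk_eq_mk_iff']
      exact ⟨c, (Lmap_smul _ c b).symm⟩)

lemma tau_mk (t : ℂˣ) (v : Fin 2 → ℂ) (hv : v ≠ 0) :
    tau t (Projectivization.mk ℂ v hv) =
      Projectivization.mk ℂ (Lmap (t : ℂ) v) (Lmap_ne_zero t hv) := rfl

lemma continuous_tau_joint :
    Continuous (fun q : ℂˣ × ℙ ℂ (Fin 2 → ℂ) => tau q.1 q.2) := by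
  have hq : IsQuotientMap (Prod.map (id : ℂˣ → ℂˣ) (pmk (n := 2))) :=
    (IsOpenMap.id.prodMap isOpenMap_pmk).isQuotientMap
      (continuous_id.prodMap isQuotientMap_pmk.continuous)
      (Function.surjective_id.prodMap isQuotientMap_pmk.surjective)
  rw [hq.continuous_iff]
  show Continuous fun q : ℂˣ × {v : Fin 2 → ℂ // v ≠ 0} =>
    pmk ⟨Lmap (q.1 : ℂ) q.2.1, Lmap_ne_zero q.1 q.2.2⟩
  refine isQuotientMap_pmk.continuous.comp (Continuous.subtype_mk ?_ _)
  apply continuous_pi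
  intro i
  have hu : Continuous (fun q : ℂˣ × {v : Fin 2 → ℂ // v ≠ 0} => (q.1 : ℂ)) :=
    Units.continuous_val.comp continuous_fst
  have hv0 : Continuous (fun q : ℂˣ × {v : Fin 2 → ℂ // v ≠ 0} => q.2.1 0) :=
    (continuous_apply 0).comp (continuous_subtype_val.comp continuous_snd)
  have hv1 : Continuous (fun q : ℂˣ × {v : Fin 2 → ℂ // v ≠ 0} => q.2.1 1) :=
    (continuous_apply 1).comp (continuous_subtype_val.comp continuous_snd)
  fin_cases i
  · show Continuous fun q : ℂˣ × {v : Fin 2 → ℂ // v ≠ 0} =>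
      (1 + (q.1 : ℂ)) * q.2.1 0 + (1 - (q.1 : ℂ)) * q.2.1 1
    exact ((continuous_const.add hu).mul hv0).add ((continuous_const.sub hu).mul hv1)
  · show Continuous fun q : ℂˣ × {v : Fin 2 → ℂ // v ≠ 0} =>
      (1 - (q.1 : ℂ)) * q.2.1 0 + (1 + (q.1 : ℂ)) * q.2.1 1
    exact ((continuous_const.sub hu).mul hv0).add ((continuous_const.add hu).mul hv1)

/-! ### Special points and fibers of `σ` -/

lemma oneone_ne_zero : (![1, 1] : Fin 2 → ℂ) ≠ 0 := by
  intro h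
  simpa using congrFun h 0

lemma onemone_ne_zero : (![1, -1] : Fin 2 → ℂ) ≠ 0 := by
  intro h
  simpa using congrFun h 0

/-- The two preimages of the node under the normalization. -/
def ptA : ℙ ℂ (Fin 2 → ℂ) := Projectivization.mk ℂ ![1, 1] oneone_ne_zero

def ptB : ℙ ℂ (Fin 2 → ℂ) := Projectivization.mk ℂ ![1, -1] onemone_ne_zero

lemma sigma_ptA : sigma ptA = nodalP0 := by
  rw [ptA, sigma_mk, nodalP0, Projectivization.mk_eq_mk_iff']
  refine ⟨1, funext3 ?_ ?_ ?_⟩ <;>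
    simp [SigM]

lemma sigma_ptB : sigma ptB = nodalP0 := by
  rw [ptB, sigma_mk, nodalP0, Projectivization.mk_eq_mk_iff']
  refine ⟨-1, funext3 ?_ ?_ ?_⟩ <;>
    simp [SigM] <;> norm_num

lemma tau_ptA (t : ℂˣ) : tau t ptA = ptA := by
  rw [ptA, tau_mk, Projectivization.mk_eq_mk_iff']
  refine ⟨2, funext2 ?_ ?_⟩ <;>
    simp [Lmap] <;> ring

lemma tau_ptB (t : ℂˣ) : tau t ptB = ptB := by
  rw [ptB, tau_mk, Projectivization.mk_eq_mk_iff']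
  refine ⟨2 * (t : ℂ), funext2 ?_ ?_⟩ <;>
    simp [Lmap] <;> ring

lemma tau_tau (t s : ℂˣ) (u : ℙ ℂ (Fin 2 → ℂ)) : tau t (tau s u) = tau (t * s) u := by
  induction u with
  | h v hv =>
    rw [tau_mk, tau_mk, tau_mk, Projectivization.mk_eq_mk_iff']
    refine ⟨2, ?_⟩
    rw [Units.val_mul]
    exact (Lmap_comp _ _ v).symm

lemma tau_one (u : ℙ ℂ (Fin 2 → ℂ)) : tau 1 u = u := by
  induction u with
  | h v hv =>
    rw [tau_mk, Projectivization.mk_eq_mk_iff']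
    refine ⟨2, ?_⟩
    have := Lmap_one v
    rw [show ((1 : ℂˣ) : ℂ) = 1 from rfl, this]

/-- A point of `ℙ¹` whose coordinates satisfy `s² = r²` is one of the two special points. -/
lemma mem_AB_of_sq {v : Fin 2 → ℂ} (hv : v ≠ 0) (h : v 0 ^ 2 = v 1 ^ 2) :
    Projectivization.mk ℂ v hv = ptA ∨ Projectivization.mk ℂ v hv = ptB := by
  have h1 : v 1 ≠ 0 := by
    intro h1
    rw [h1] at h
    have h0 : v 0 = 0 := by
      have : v 0 ^ 2 = 0 := by simpa using h
      exact pow_eq_zero_iff (by norm_num) |>.1 this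
    exact hv (vec2_eq_zero h0 h1)
  have hfac : (v 0 - v 1) * (v 0 + v 1) = 0 := by linear_combination h
  rcases mul_eq_zero.1 hfac with h' | h'
  · left
    rw [ptA, Projectivization.mk_eq_mk_iff']
    refine ⟨v 1, funext2 ?_ ?_⟩ <;> simp [Pi.smul_apply, smul_eq_mul]
    linear_combination -h'
  · right
    rw [ptB, Projectivization.mk_eq_mk_iff']
    refine ⟨-v 1, funext2 ?_ ?_⟩ <;> simp [Pi.smul_apply, smul_eq_mul]
    linear_combination -h'

/-- Fibers of the normalization: it is injective away from `{ptA, ptB}`, which are both sent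
to the node. -/
lemma sigma_eq_cases {u w : ℙ ℂ (Fin 2 → ℂ)} (h : sigma u = sigma w) :
    u = w ∨ ((u = ptA ∨ u = ptB) ∧ (w = ptA ∨ w = ptB)) := by
  induction u with
  | h v hv =>
  induction w with
  | h v' hv' =>
  rw [sigma_mk, sigma_mk, Projectivization.mk_eq_mk_iff'] at h
  obtain ⟨c, hc⟩ := h
  have hc0 : c ≠ 0 := by
    rintro rfl
    rw [zero_smul] at hc
    exact SigM_ne_zero hv hc.symm
  have e0 := congrFun hc 0
  have e1 := congrFun hc 1
  simp only [SigM, Pi.smul_apply, smul_eq_mul, Matrix.cons_val_zero, Matrix.cons_val_one,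
    Matrix.head_cons] at e0 e1
  by_cases hd : v 0 ^ 2 - v 1 ^ 2 = 0
  · right
    have hd' : v' 0 ^ 2 - v' 1 ^ 2 = 0 := by
      by_contra hd'
      have h1' : v' 1 = 0 := by
        have : c * (v' 1 * (v' 0 ^ 2 - v' 1 ^ 2)) = 0 := by
          rw [e0]
          linear_combination v 1 * hd
        rcases mul_eq_zero.1 this with h' | h'
        · exact absurd h' hc0
        · rcases mul_eq_zero.1 h' with h'' | h''
          · exact h''
          · exact absurd h'' hd'
      have h0' : v' 0 = 0 := by
        have : c * (v' 0 * (v' 0 ^ 2 - v' 1 ^ 2)) = 0 := by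
          rw [e1]
          linear_combination v 0 * hd
        rcases mul_eq_zero.1 this with h' | h'
        · exact absurd h' hc0
        · rcases mul_eq_zero.1 h' with h'' | h''
          · exact h''
          · exact absurd h'' hd'
      exact hv' (vec2_eq_zero h0' h1')
    exact ⟨mem_AB_of_sq hv (by linear_combination hd),
      mem_AB_of_sq hv' (by linear_combination hd')⟩
  · left
    have hd' : v' 0 ^ 2 - v' 1 ^ 2 ≠ 0 := by
      intro h'
      apply hd
      have hz1 : v 1 * (v 0 ^ 2 - v 1 ^ 2) = 0 := by
        rw [← e0]
        linear_combination c * v' 1 * h'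
      have hz0 : v 0 * (v 0 ^ 2 - v 1 ^ 2) = 0 := by
        rw [← e1]
        linear_combination c * v' 0 * h'
      by_contra hdd
      have hv1 : v 1 = 0 := by
        rcases mul_eq_zero.1 hz1 with h'' | h''
        · exact h''
        · exact absurd h'' hdd
      have hv0 : v 0 = 0 := by
        rcases mul_eq_zero.1 hz0 with h'' | h''
        · exact h''
        · exact absurd h'' hdd
      exact hv (vec2_eq_zero hv0 hv1)
    rw [Projectivization.mk_eq_mk_iff']
    refine ⟨c * (v' 0 ^ 2 - v' 1 ^ 2) / (v 0 ^ 2 - v 1 ^ 2), funext2 ?_ ?_⟩ <;>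
      simp only [Pi.smul_apply, smul_eq_mul]
    · field_simp
      linear_combination e1
    · field_simp
      linear_combination e0

/-! ### The induced action on the curve -/

lemma sigma_mem (u : ℙ ℂ (Fin 2 → ℂ)) : sigma u ∈ nodalCubic := by
  induction u with
  | h v hv => exact ⟨SigM v, SigM_ne_zero hv, rfl, cubicEq_SigM v⟩

/-- The normalization, corestricted to the curve. -/
def sigma' (u : ℙ ℂ (Fin 2 → ℂ)) : ↥nodalCubic := ⟨sigma u, sigma_mem u⟩

lemma continuous_sigma' : Continuous sigma' :=
  Continuous.subtype_mk continuous_sigma _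

lemma sigma'_surj : Function.Surjective sigma' := by
  rintro ⟨p, v, hv, rfl, hcub⟩
  rw [cubicEq] at hcub
  by_cases h0 : v 0 = 0
  · by_cases h1 : v 1 = 0
    · -- the node
      have h2 : v 2 ≠ 0 := fun h2 => hv (vec3_eq_zero h0 h1 h2)
      refine ⟨ptA, Subtype.ext ?_⟩
      show sigma ptA = Projectivization.mk ℂ v hv
      rw [sigma_ptA, nodalP0, Projectivization.mk_eq_mk_iff']
      refine ⟨(v 2)⁻¹, funext3 ?_ ?_ ?_⟩ <;>
        simp [Pi.smul_apply, smul_eq_mul, h0, h1, inv_mul_cancel₀ h2]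
    · -- the point at infinity `[0:1:0]`
      have h2 : v 2 = 0 := by
        rw [h0] at hcub
        have : v 2 * v 1 ^ 2 = 0 := by linear_combination hcub
        rcases mul_eq_zero.1 this with h' | h'
        · exact h'
        · exact absurd (pow_eq_zero_iff (by norm_num) |>.1 h') h1
      have hne : (![1, 0] : Fin 2 → ℂ) ≠ 0 := by
        intro h
        simpa using congrFun h 0
      refine ⟨Projectivization.mk ℂ ![1, 0] hne, Subtype.ext ?_⟩
      show sigma (Projectivization.mk ℂ ![1, 0] hne) = Projectivization.mk ℂ v hv
      rw [sigma_mk, Projectivization.mk_eq_mk_iff']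
      refine ⟨(v 1)⁻¹, funext3 ?_ ?_ ?_⟩ <;>
        simp [SigM, Pi.smul_apply, smul_eq_mul, h0, h2, inv_mul_cancel₀ h1]
  · -- the affine part, `x ≠ 0`
    have h2 : v 2 ≠ 0 := by
      intro h2
      rw [h2] at hcub
      have : v 0 ^ 3 = 0 := by linear_combination -hcub
      exact h0 (pow_eq_zero_iff (by norm_num) |>.1 this)
    have hne : (![v 1, v 0] : Fin 2 → ℂ) ≠ 0 := by
      intro h
      exact h0 (by simpa using congrFun h 1)
    have key : v 2 * (v 1 ^ 2 - v 0 ^ 2) = v 0 ^ 3 := by linear_combination hcub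
    refine ⟨Projectivization.mk ℂ ![v 1, v 0] hne, Subtype.ext ?_⟩
    show sigma (Projectivization.mk ℂ ![v 1, v 0] hne) = Projectivization.mk ℂ v hv
    rw [sigma_mk, Projectivization.mk_eq_mk_iff']
    refine ⟨v 0 ^ 3 / v 2, funext3 ?_ ?_ ?_⟩ <;>
      simp only [SigM, Pi.smul_apply, smul_eq_mul, Matrix.cons_val_zero, Matrix.cons_val_one,
        Matrix.head_cons, Matrix.cons_val_two, Matrix.tail_cons]
    · rw [div_mul_eq_mul_div, div_eq_iff h2]
      linear_combination (-(v 0)) * key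
    · field_simp
      linear_combination (-(v 1)) * key
    · field_simp

/-- A choice of preimage under the normalization. -/
def nu (p : ↥nodalCubic) : ℙ ℂ (Fin 2 → ℂ) := (sigma'_surj p).choose

lemma sigma'_nu (p : ↥nodalCubic) : sigma' (nu p) = p := (sigma'_surj p).choose_spec

lemma sigma'_AB {w : ℙ ℂ (Fin 2 → ℂ)} (hw : w = ptA ∨ w = ptB) :
    sigma' w = ⟨nodalP0, nodalP0_mem⟩ := by
  rcases hw with rfl | rfl
  · exact Subtype.ext sigma_ptA
  · exact Subtype.ext sigma_ptB

/-- The action of `t ∈ ℂˣ` on the curve. -/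
def F (t : ℂˣ) (p : ↥nodalCubic) : ↥nodalCubic := sigma' (tau t (nu p))

lemma F_sigma' (t : ℂˣ) (u : ℙ ℂ (Fin 2 → ℂ)) : F t (sigma' u) = sigma' (tau t u) := by
  have h2 : sigma (nu (sigma' u)) = sigma u := congrArg Subtype.val (sigma'_nu (sigma' u))
  rcases sigma_eq_cases h2 with heq | ⟨hnu, hu⟩
  · rw [F, heq]
  · rw [F, sigma'_AB, sigma'_AB]
    · rcases hu with rfl | rfl
      · exact Or.inl (tau_ptA t)
      · exact Or.inr (tau_ptB t)
    · rcases hnu with h | h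
      · exact Or.inl (by rw [h]; exact tau_ptA t)
      · exact Or.inr (by rw [h]; exact tau_ptB t)

lemma F_F (t s : ℂˣ) (p : ↥nodalCubic) : F t (F s p) = F (t * s) p := by
  show F t (sigma' (tau s (nu p))) = F (t * s) p
  rw [F_sigma', tau_tau]
  rfl

lemma F_one (p : ↥nodalCubic) : F 1 p = p := by
  show sigma' (tau 1 (nu p)) = p
  rw [tau_one]
  exact sigma'_nu p

lemma isQuotientMap_sigma' : IsQuotientMap sigma' :=
  (continuous_sigma'.isProperMap.isClosedMap).isQuotientMap continuous_sigma' sigma'_surj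

lemma continuous_Lmap (t : ℂ) : Continuous (Lmap t) := by
  refine continuous_pi fun i => ?_
  fin_cases i
  · show Continuous fun v : Fin 2 → ℂ => (1 + t) * v 0 + (1 - t) * v 1
    fun_prop
  · show Continuous fun v : Fin 2 → ℂ => (1 - t) * v 0 + (1 + t) * v 1
    fun_prop

lemma continuous_tau (t : ℂˣ) : Continuous (tau t) := by
  rw [isQuotientMap_pmk.continuous_iff]
  show Continuous fun v : {v : Fin 2 → ℂ // v ≠ 0} => pmk ⟨Lmap (t : ℂ) v.1, Lmap_ne_zero t v.2⟩
  exact isQuotientMap_pmk.continuous.comp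
    (Continuous.subtype_mk ((continuous_Lmap (t : ℂ)).comp continuous_subtype_val) _)

lemma continuous_F (t : ℂˣ) : Continuous (F t) := by
  rw [isQuotientMap_sigma'.continuous_iff]
  have hco : F t ∘ sigma' = fun u => sigma' (tau t u) := funext fun u => F_sigma' t u
  rw [hco]
  exact continuous_sigma'.comp (continuous_tau t)

lemma continuous_F_joint : Continuous fun q : ℂˣ × ↥nodalCubic => F q.1 q.2 := by
  have hq : IsQuotientMap (Prod.map (id : ℂˣ → ℂˣ) sigma') :=
    ((isProperMap_id.prodMap continuous_sigma'.isProperMap).isClosedMap).isQuotientMap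
      (continuous_id.prodMap continuous_sigma')
      (Function.surjective_id.prodMap sigma'_surj)
  rw [hq.continuous_iff]
  have hco : (fun q : ℂˣ × ↥nodalCubic => F q.1 q.2) ∘ Prod.map id sigma' =
      fun q : ℂˣ × ℙ ℂ (Fin 2 → ℂ) => sigma' (tau q.1 q.2) :=
    funext fun q => F_sigma' q.1 q.2
  rw [hco]
  exact continuous_sigma'.comp continuous_tau_joint

/-- The only fixed points of a nontrivial `τ t` are the two special points. -/
lemma tau_fixed {t : ℂˣ} (ht : (t : ℂ) ≠ 1) {u : ℙ ℂ (Fin 2 → ℂ)} (h : tau t u = u) :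
    u = ptA ∨ u = ptB := by
  induction u with
  | h v hv =>
  rw [tau_mk, Projectivization.mk_eq_mk_iff'] at h
  obtain ⟨c, hc⟩ := h
  have e0 := congrFun hc 0
  have e1 := congrFun hc 1
  simp only [Lmap, Pi.smul_apply, smul_eq_mul, Matrix.cons_val_zero, Matrix.cons_val_one,
    Matrix.head_cons] at e0 e1
  apply mem_AB_of_sq hv
  have hsum : (c - 2) * (v 0 + v 1) = 0 := by linear_combination e0 + e1
  have hdiff : (c - 2 * (t : ℂ)) * (v 0 - v 1) = 0 := by linear_combination e0 - e1
  by_contra hsq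
  have hps : v 0 + v 1 ≠ 0 := fun hh => hsq (by linear_combination (v 0 - v 1) * hh)
  have hms : v 0 - v 1 ≠ 0 := fun hh => hsq (by linear_combination (v 0 + v 1) * hh)
  have hc2 : c = 2 := by
    rcases mul_eq_zero.1 hsum with h' | h'
    · linear_combination h'
    · exact absurd h' hps
  have hct : c = 2 * (t : ℂ) := by
    rcases mul_eq_zero.1 hdiff with h' | h'
    · linear_combination h'
    · exact absurd h' hms
  exact ht (by linear_combination (hc2 - hct) / 2)

lemma nu_node_AB : nu ⟨nodalP0, nodalP0_mem⟩ = ptA ∨ nu ⟨nodalP0, nodalP0_mem⟩ = ptB := by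
  have h : sigma (nu ⟨nodalP0, nodalP0_mem⟩) = sigma ptA := by
    rw [sigma_ptA]
    exact congrArg Subtype.val (sigma'_nu _)
  rcases sigma_eq_cases h with heq | ⟨h1, _⟩
  · exact Or.inl heq
  · exact h1

lemma F_node (t : ℂˣ) : F t ⟨nodalP0, nodalP0_mem⟩ = ⟨nodalP0, nodalP0_mem⟩ := by
  show sigma' (tau t (nu ⟨nodalP0, nodalP0_mem⟩)) = _
  apply sigma'_AB
  rcases nu_node_AB with h | h
  · rw [h]; exact Or.inl (tau_ptA t)
  · rw [h]; exact Or.inr (tau_ptB t)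

lemma F_fixed {p : ↥nodalCubic} (hfix : F (Units.mk0 (2 : ℂ) two_ne_zero) p = p) :
    p = ⟨nodalP0, nodalP0_mem⟩ := by
  set t0 : ℂˣ := Units.mk0 (2 : ℂ) two_ne_zero with ht0
  by_contra hne
  have hup : sigma' (nu p) = p := sigma'_nu p
  have huA : nu p ≠ ptA := fun h => hne (by rw [← hup]; exact sigma'_AB (Or.inl h))
  have huB : nu p ≠ ptB := fun h => hne (by rw [← hup]; exact sigma'_AB (Or.inr h))
  have hskey : sigma' (tau t0 (nu p)) = sigma' (nu p) := by
    rw [hup]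
    exact hfix
  rcases sigma_eq_cases (congrArg Subtype.val hskey) with heq | ⟨_, h2⟩
  · have := tau_fixed (t := t0) (by norm_num [ht0]) heq
    rcases this with h | h
    · exact huA h
    · exact huB h
  · rcases h2 with h | h
    · exact huA h
    · exact huB h

/-- The action homeomorphism. -/
def rho (t : ℂˣ) : ↥nodalCubic ≃ₜ ↥nodalCubic where
  toFun := F t
  invFun := F t⁻¹
  left_inv p := by rw [F_F, inv_mul_cancel, F_one]
  right_inv p := by rw [F_F, mul_inv_cancel, F_one]
  continuous_toFun := continuous_F t
  continuous_invFun := continuous_F t⁻¹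

lemma rho_apply (t : ℂˣ) (p : ↥nodalCubic) : rho t p = F t p := rfl

end

end NodalAux

/-- The nodal plane cubic `C = {[x:y:z] : z y² = x³ + x² z}` carries an action of the
multiplicative group `ℂˣ` by self-homeomorphisms, jointly continuous in
`(t, p) ∈ ℂˣ × C`, whose fixed-point set is exactly the node `p₀ = [0:0:1]`. -/
theorem nodalCubic_cstar_action :
    ∃ ρ : ℂˣ →* (↥nodalCubic ≃ₜ ↥nodalCubic),
      Continuous (fun q : ℂˣ × ↥nodalCubic => ρ q.1 q.2) ∧
      {p : ↥nodalCubic | ∀ t : ℂˣ, ρ t p = p} = {⟨nodalP0, nodalP0_mem⟩} := by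
  refine ⟨{ toFun := NodalAux.rho, map_one' := ?_, map_mul' := ?_ }, ?_, ?_⟩
  · ext p
    exact congrArg Subtype.val (NodalAux.F_one p)
  · intro t s
    ext p
    exact congrArg Subtype.val (NodalAux.F_F t s p).symm
  · exact NodalAux.continuous_F_joint
  · ext p
    simp only [Set.mem_setOf_eq, Set.mem_singleton_iff]
    constructor
    · intro hfix
      exact NodalAux.F_fixed (hfix (Units.mk0 (2 : ℂ) two_ne_zero))
    · rintro rfl t
      exact NodalAux.F_node t
end
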